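/- arXiv:2203.03303 — 4 statements merged into one kernel-verified Lean document; each statement's English description precedes it below -/
import Mathlib

section
/- For any measurable function f on a measurable space X and any two probability measures q and p on X with q absolutely continuous with respect to p, the expectation of f under q is at most the KL divergence of q from p plus the logarithm of the expectation under p of exp(f). -/
open MeasureTheory Real

lemma integral_llr_nonneg_aux {X : Type*} [MeasurableSpace X] (q ν : Measure X)
    [IsProbabilityMeasure q] [IsProbabilityMeasure ν] (hqν : q ≪ ν)
    (hllr : Integrable (llr q ν) q) :
    0 ≤ ∫ x, llr q ν x ∂q := by
  have h_pos : ∀ᵐ x ∂q, 0 < q.rnDeriv ν x := Measure.rnDeriv_pos hqν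
  have h_lt_top : ∀ᵐ x ∂q, q.rnDeriv ν x < ⊤ := hqν.ae_le (Measure.rnDeriv_lt_top q ν)
  -- lintegral of inverse of rnDeriv w.r.t. q is ≤ 1
  have h_lint : ∫⁻ x, (q.rnDeriv ν x)⁻¹ ∂q ≤ 1 := by
    rw [← lintegral_rnDeriv_mul hqν (f := fun x => (q.rnDeriv ν x)⁻¹) (Measure.measurable_rnDeriv q ν).inv.aemeasurable]
    calc ∫⁻ x, q.rnDeriv ν x * (q.rnDeriv ν x)⁻¹ ∂ν
        ≤ ∫⁻ _, 1 ∂ν := lintegral_mono fun x => ENNReal.mul_inv_le_one _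
      _ = 1 := by simp
  have h_meas : AEMeasurable (fun x => (q.rnDeriv ν x)⁻¹) q :=
    (Measure.measurable_rnDeriv q ν).inv.aemeasurable
  have h_int : Integrable (fun x => ((q.rnDeriv ν x)⁻¹).toReal) q := by
    refine integrable_toReal_of_lintegral_ne_top h_meas ?_
    exact (lt_of_le_of_lt h_lint ENNReal.one_lt_top).ne
  have h_eq : ∫ x, ((q.rnDeriv ν x)⁻¹).toReal ∂q = (∫⁻ x, (q.rnDeriv ν x)⁻¹ ∂q).toReal := by
    refine integral_toReal h_meas ?_
    filter_upwards [h_pos] with x hx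
    simp [ENNReal.inv_lt_top, hx]
  have h_le_one : ∫ x, ((q.rnDeriv ν x)⁻¹).toReal ∂q ≤ 1 := by
    rw [h_eq]
    exact ENNReal.toReal_le_of_le_ofReal one_pos.le (by simpa using h_lint)
  -- pointwise: -llr x = log ((rnDeriv)⁻¹.toReal) ≤ (rnDeriv)⁻¹.toReal - 1
  have h_ptwise : ∀ᵐ x ∂q, -llr q ν x ≤ ((q.rnDeriv ν x)⁻¹).toReal - 1 := by
    filter_upwards [h_pos, h_lt_top] with x hx hx'
    have ht : 0 < (q.rnDeriv ν x).toReal := ENNReal.toReal_pos hx.ne' hx'.ne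
    have : -llr q ν x = Real.log ((q.rnDeriv ν x).toReal)⁻¹ := by
      rw [llr, Real.log_inv]
    rw [this, ENNReal.toReal_inv]
    exact Real.log_le_sub_one_of_pos (inv_pos.mpr ht)
  have h_int_all : ∫ x, -llr q ν x ∂q ≤ ∫ x, (((q.rnDeriv ν x)⁻¹).toReal - 1) ∂q :=
    integral_mono_ae hllr.neg (h_int.sub (integrable_const 1)) h_ptwise
  rw [integral_neg, integral_sub h_int (integrable_const 1)] at h_int_all
  simp only [integral_const, measure_univ, probReal_univ, ENNReal.toReal_one, smul_eq_mul, one_mul] at h_int_all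
  linarith

/-- Compression lemma (Donsker–Varadhan change of measure). -/
theorem stmt_0 {X : Type*} [MeasurableSpace X] (q p : Measure X)
    [IsProbabilityMeasure q] [IsProbabilityMeasure p] (hqp : q ≪ p)
    (f : X → ℝ) (hf : Measurable f)
    (hexp : Integrable (fun x => Real.exp (f x)) p)
    (hfq : Integrable f q)
    (hllr : Integrable (fun x => Real.log ((q.rnDeriv p x).toReal)) q) :
    ∫ x, f x ∂q ≤
      (∫ x, Real.log ((q.rnDeriv p x).toReal) ∂q) + Real.log (∫ x, Real.exp (f x) ∂p) := by
  have hllr' : Integrable (llr q p) q := hllr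
  have hprob : IsProbabilityMeasure (p.tilted f) := isProbabilityMeasure_tilted hexp
  have hqt : q ≪ p.tilted f := hqp.trans (absolutelyContinuous_tilted hexp)
  have h_int_t : Integrable (llr q (p.tilted f)) q :=
    integrable_llr_tilted_right hqp hfq hllr' hexp
  have h_eq := integral_llr_tilted_right hqp hfq hexp hllr'
  have h_nonneg := integral_llr_nonneg_aux q (p.tilted f) hqt h_int_t
  rw [h_eq] at h_nonneg
  have : ∫ x, llr q p x ∂q = ∫ x, Real.log ((q.rnDeriv p x).toReal) ∂q := rfl
  linarith [this ▸ h_nonneg]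
end

section
/- Let X₁,…,Xₙ be a supermartingale difference sequence (i.e. E[X_i | X₁,…,X_{i−1}] ≤ 0 for each i) such that X_i ∈ [a_i, b_i] almost surely for each i. Then for any λ > 0, E[exp(λ·Σ_{i=1}^n X_i)] ≤ exp((λ²/8)·Σ_{i=1}^n (b_i − a_i)²). -/
open MeasureTheory


lemma hoeff_scalar (p : ℝ) (hp0 : 0 ≤ p) (hp1 : p ≤ 1) {t : ℝ} (ht : 0 ≤ t) :
    1 - p + p * Real.exp t ≤ Real.exp (p * t + t ^ 2 / 8) := by
  set D : ℝ → ℝ := fun t => 1 - p + p * Real.exp t with hD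
  have hD1 : ∀ s : ℝ, 0 ≤ s → 1 ≤ D s := by
    intro s hs
    have := Real.one_le_exp hs
    simp only [hD]
    nlinarith
  have hDpos : ∀ s : ℝ, 0 ≤ s → 0 < D s := fun s hs => lt_of_lt_of_le one_pos (hD1 s hs)
  have hDderiv : ∀ s : ℝ, HasDerivAt D (p * Real.exp s) s := by
    intro s
    exact ((Real.hasDerivAt_exp s).const_mul p).const_add (1 - p)
  set F : ℝ → ℝ := fun t => p * t + t ^ 2 / 8 - Real.log (D t) with hF
  set G : ℝ → ℝ := fun t => p + t / 4 - p * Real.exp t / D t with hG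
  have hFderiv : ∀ s : ℝ, 0 ≤ s → HasDerivAt F (G s) s := by
    intro s hs
    have h1 : HasDerivAt (fun t => Real.log (D t)) (p * Real.exp s / D s) s := by
      have := (Real.hasDerivAt_log (hDpos s hs).ne').comp s (hDderiv s)
      rw [div_eq_inv_mul]; exact this
    have h2 : HasDerivAt (fun t : ℝ => p * t + t ^ 2 / 8) (p + s / 4) s := by
      have := ((hasDerivAt_id s).const_mul p).add
        (((hasDerivAt_pow 2 s).div_const 8))
      refine this.congr_deriv ?_
      norm_num
      ring
    exact h2.sub h1
  have hGderiv : ∀ s : ℝ, 0 ≤ s →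
      HasDerivAt G (1 / 4 - p * Real.exp s * (1 - p) / (D s) ^ 2) s := by
    intro s hs
    have hq : HasDerivAt (fun t => p * Real.exp t / D t)
        ((p * Real.exp s * D s - p * Real.exp s * (p * Real.exp s)) / (D s) ^ 2) s :=
      ((Real.hasDerivAt_exp s).const_mul p).div (hDderiv s) (hDpos s hs).ne'
    have h2 : HasDerivAt (fun t : ℝ => p + t / 4) (1 / 4) s := by
      simpa using ((hasDerivAt_id s).div_const 4).const_add p
    have := h2.sub hq
    refine this.congr_deriv ?_
    have : D s = 1 - p + p * Real.exp s := rfl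
    rw [this]
    ring
  have hGnonneg : ∀ s : ℝ, 0 ≤ s → 0 ≤ G s := by
    have hmono : MonotoneOn G (Set.Ici (0:ℝ)) := by
      apply monotoneOn_of_deriv_nonneg (convex_Ici 0)
      · exact fun s hs => ((hGderiv s hs).continuousAt.continuousWithinAt)
      · intro s hs
        exact ((hGderiv s (le_of_lt (by simpa using hs))).differentiableAt.differentiableWithinAt)
      · intro s hs
        have hs' : (0:ℝ) ≤ s := le_of_lt (by simpa using hs)
        rw [(hGderiv s hs').deriv]
        have he : 0 < Real.exp s := Real.exp_pos s
        have hD2 : (0:ℝ) < (D s) ^ 2 := pow_pos (hDpos s hs') 2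
        rw [sub_nonneg, div_le_iff₀ hD2]
        show p * Real.exp s * (1 - p) ≤ 1 / 4 * (1 - p + p * Real.exp s) ^ 2
        nlinarith [sq_nonneg ((1 - p) - p * Real.exp s)]
    intro s hs
    have h0 : G 0 = 0 := by
      simp [hG, hD]
    have := hmono (Set.self_mem_Ici) (by exact hs) hs
    linarith [h0 ▸ this]
  have hFmono : MonotoneOn F (Set.Ici (0:ℝ)) := by
    apply monotoneOn_of_deriv_nonneg (convex_Ici 0)
    · exact fun s hs => ((hFderiv s hs).continuousAt.continuousWithinAt)
    · intro s hs
      exact ((hFderiv s (le_of_lt (by simpa using hs))).differentiableAt.differentiableWithinAt)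
    · intro s hs
      have hs' : (0:ℝ) ≤ s := le_of_lt (by simpa using hs)
      rw [(hFderiv s hs').deriv]
      exact hGnonneg s hs'
  have hF0 : F 0 = 0 := by simp [hF, hD]
  have hFt : 0 ≤ F t := by
    have := hFmono Set.self_mem_Ici (by exact ht) ht
    linarith [hF0 ▸ this]
  have hlog : Real.log (D t) ≤ p * t + t ^ 2 / 8 := by
    simp only [hF] at hFt; linarith
  calc D t = Real.exp (Real.log (D t)) := (Real.exp_log (hDpos t ht)).symm
    _ ≤ Real.exp (p * t + t ^ 2 / 8) := Real.exp_le_exp.mpr hlog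

lemma int_exp_of_ae_le {Ω : Type*} [m0 : MeasurableSpace Ω] (μ : Measure Ω)
    [IsProbabilityMeasure μ] {f : Ω → ℝ} (hf : Measurable f) {c : ℝ}
    (hc : ∀ᵐ ω ∂μ, f ω ≤ c) : Integrable (fun ω => Real.exp (f ω)) μ := by
  refine Integrable.mono' (integrable_const (Real.exp c))
    (Real.measurable_exp.comp hf).aestronglyMeasurable ?_
  filter_upwards [hc] with ω hω
  rw [Real.norm_eq_abs, abs_of_pos (Real.exp_pos _)]
  exact Real.exp_le_exp.2 hω

lemma cond_hoeff {Ω : Type*} [m0 : MeasurableSpace Ω] (μ : Measure Ω) [IsProbabilityMeasure μ]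
    {m : MeasurableSpace Ω} (hm : m ≤ m0) {X : Ω → ℝ} (hX : Measurable[m0] X)
    (hXint : Integrable X μ) {a b : ℝ} (hmem : ∀ᵐ ω ∂μ, X ω ∈ Set.Icc a b)
    (hsuper : ∀ᵐ ω ∂μ, (μ[X | m]) ω ≤ 0) {lam : ℝ} (hlam : 0 < lam) :
    ∀ᵐ ω ∂μ, (μ[fun ω => Real.exp (lam * X ω) | m]) ω ≤
      Real.exp (lam ^ 2 * (b - a) ^ 2 / 8) := by
  haveI : (MeasureTheory.ae μ).NeBot := ae_neBot.mpr (IsProbabilityMeasure.ne_zero μ)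
  have hRHS0 : (0:ℝ) ≤ lam ^ 2 * (b - a) ^ 2 / 8 := by positivity
  have hRHS1 : (1:ℝ) ≤ Real.exp (lam ^ 2 * (b - a) ^ 2 / 8) := by
    calc (1:ℝ) = Real.exp 0 := Real.exp_zero.symm
      _ ≤ _ := Real.exp_le_exp.2 hRHS0
  have hexp_int : Integrable (fun ω => Real.exp (lam * X ω)) μ :=
    int_exp_of_ae_le (m0 := m0) μ (hX.const_mul lam)
      (hmem.mono fun ω hω => mul_le_mul_of_nonneg_left hω.2 hlam.le)
  -- a ≤ 0
  have hXgea : (fun _ : Ω => a) ≤ᵐ[μ] X := hmem.mono fun ω hω => hω.1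
  have hca : μ[(fun _ : Ω => a) | m] =ᵐ[μ] fun _ => a := by
    rw [condExp_const hm a]
  have hcm : ∀ᵐ ω ∂μ, a ≤ (μ[X | m]) ω := by
    filter_upwards [condExp_mono (integrable_const a) hXint hXgea, hca] with ω h1 h2
    rw [h2] at h1; exact h1
  have ha0 : a ≤ 0 := by
    obtain ⟨ω, h1, h2⟩ := (hcm.and hsuper).exists
    linarith
  by_cases hb : b ≤ 0
  · -- exp (lam * X) ≤ exp (lam * b) ≤ 1 ≤ RHS
    have hle : (fun ω => Real.exp (lam * X ω)) ≤ᵐ[μ] fun _ => Real.exp (lam * b) :=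
      hmem.mono fun ω hω => Real.exp_le_exp.2 (mul_le_mul_of_nonneg_left hω.2 hlam.le)
    have h1 := condExp_mono (m := m) hexp_int (integrable_const (Real.exp (lam * b))) hle
    have h2 : μ[(fun _ : Ω => Real.exp (lam * b)) | m] =ᵐ[μ] fun _ => Real.exp (lam * b) := by
      rw [condExp_const hm]
    filter_upwards [h1, h2] with ω hω1 hω2
    rw [hω2] at hω1
    refine hω1.trans ?_
    calc Real.exp (lam * b) ≤ Real.exp 0 :=
          Real.exp_le_exp.2 (mul_nonpos_of_nonneg_of_nonpos hlam.le hb)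
      _ ≤ _ := by rw [Real.exp_zero]; exact hRHS1
  · push_neg at hb
    have hab : a < b := lt_of_le_of_lt ha0 hb
    have hba : 0 < b - a := by linarith
    set c2 : ℝ := (Real.exp (lam * b) - Real.exp (lam * a)) / (b - a) with hc2
    set c1 : ℝ := (b * Real.exp (lam * a) - a * Real.exp (lam * b)) / (b - a) with hc1
    have hc2nonneg : 0 ≤ c2 := by
      apply div_nonneg _ hba.le
      have : lam * a ≤ lam * b := mul_le_mul_of_nonneg_left hab.le hlam.le
      linarith [Real.exp_le_exp.2 this]
    have chord : ∀ x, a ≤ x → x ≤ b → Real.exp (lam * x) ≤ c1 + c2 * x := by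
      intro x hax hxb
      have hθ0 : 0 ≤ (b - x) / (b - a) := div_nonneg (by linarith) hba.le
      have hθ1 : 0 ≤ (x - a) / (b - a) := div_nonneg (by linarith) hba.le
      have hsum : (b - x) / (b - a) + (x - a) / (b - a) = 1 := by
        field_simp
        ring
      have hcv := convexOn_exp.2 (Set.mem_univ (lam * a)) (Set.mem_univ (lam * b)) hθ0 hθ1 hsum
      simp only [smul_eq_mul] at hcv
      have harg : (b - x) / (b - a) * (lam * a) + (x - a) / (b - a) * (lam * b) = lam * x := by
        field_simp
        ring
      rw [harg] at hcv
      refine hcv.trans (le_of_eq ?_)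
      rw [hc1, hc2]
      field_simp
      ring
    have hg_int : Integrable (fun ω => c1 + c2 * X ω) μ :=
      (integrable_const c1).add (hXint.const_mul c2)
    have h1 : μ[(fun ω => Real.exp (lam * X ω)) | m] ≤ᵐ[μ] μ[(fun ω => c1 + c2 * X ω) | m] :=
      condExp_mono (m := m) hexp_int hg_int (hmem.mono fun ω hω => chord (X ω) hω.1 hω.2)
    have h2 : μ[(fun ω => c1 + c2 * X ω) | m] =ᵐ[μ] fun ω => c1 + c2 * (μ[X | m]) ω := by
      have hadd : μ[(fun ω => c1 + c2 * X ω) | m]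
          =ᵐ[μ] μ[(fun _ : Ω => c1) | m] + μ[c2 • X | m] := by
        have : (fun ω => c1 + c2 * X ω) = (fun _ : Ω => c1) + c2 • X := by
          funext ω; simp [smul_eq_mul]
        rw [this]
        exact condExp_add (integrable_const c1) (hXint.smul c2) m
      have hsmul : μ[c2 • X | m] =ᵐ[μ] c2 • μ[X | m] := condExp_smul c2 X m
      filter_upwards [hadd, hsmul] with ω hω1 hω2
      rw [hω1]
      simp only [Pi.add_apply, condExp_const hm]
      rw [hω2]
      simp [smul_eq_mul]
    -- c1 ≤ RHS
    have hc1le : c1 ≤ Real.exp (lam ^ 2 * (b - a) ^ 2 / 8) := by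
      set p : ℝ := -a / (b - a) with hp
      set t : ℝ := lam * (b - a) with htdef
      have hp0 : 0 ≤ p := div_nonneg (by linarith) hba.le
      have hp1 : p ≤ 1 := by
        rw [hp, div_le_one hba]
        linarith
      have ht0 : 0 ≤ t := by positivity
      have hsc := hoeff_scalar p hp0 hp1 ht0
      have hkey : c1 = Real.exp (lam * a) * (1 - p + p * Real.exp t) := by
        have he : Real.exp (lam * b) = Real.exp (lam * a) * Real.exp t := by
          rw [← Real.exp_add, htdef]
          ring_nf
        rw [hc1, he, hp]
        field_simp
        ring
      have hexp_eq : lam * a + (p * t + t ^ 2 / 8) = lam ^ 2 * (b - a) ^ 2 / 8 := by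
        rw [hp, htdef]
        field_simp
        ring
      calc c1 = Real.exp (lam * a) * (1 - p + p * Real.exp t) := hkey
        _ ≤ Real.exp (lam * a) * Real.exp (p * t + t ^ 2 / 8) :=
            mul_le_mul_of_nonneg_left hsc (Real.exp_pos _).le
        _ = Real.exp (lam * a + (p * t + t ^ 2 / 8)) := (Real.exp_add _ _).symm
        _ = _ := by rw [hexp_eq]
    filter_upwards [h1, h2, hsuper] with ω hω1 hω2 hω3
    have : c1 + c2 * (μ[X | m]) ω ≤ c1 := by
      nlinarith
    calc (μ[fun ω => Real.exp (lam * X ω) | m]) ω ≤ c1 + c2 * (μ[X | m]) ω := by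
          rw [← hω2]; exact hω1
      _ ≤ c1 := this
      _ ≤ _ := hc1le

/-- Hoeffding–Azuma moment generating function bound for supermartingale
difference sequences with bounded increments. -/
theorem stmt_2 {Ω : Type*} [m0 : MeasurableSpace Ω] (μ : Measure Ω) [IsProbabilityMeasure μ]
    (n : ℕ) (X : ℕ → Ω → ℝ) (a b : ℕ → ℝ)
    (𝒢 : ℕ → MeasurableSpace Ω) (h𝒢 : ∀ i, 𝒢 i ≤ m0) (h𝒢mono : Monotone 𝒢)
    (hadapt : ∀ i, Measurable[𝒢 (i + 1)] (X i))
    (hint : ∀ i, Integrable (X i) μ)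
    (hmem : ∀ i, ∀ᵐ ω ∂μ, X i ω ∈ Set.Icc (a i) (b i))
    (hsuper : ∀ i, ∀ᵐ ω ∂μ, (μ[X i | 𝒢 i]) ω ≤ 0)
    (lam : ℝ) (hlam : 0 < lam) :
    ∫ ω, Real.exp (lam * ∑ i ∈ Finset.range n, X i ω) ∂μ ≤
      Real.exp (lam ^ 2 / 8 * ∑ i ∈ Finset.range n, (b i - a i) ^ 2) := by
  have hXm : ∀ i, Measurable (X i) := fun i => (hadapt i).mono (h𝒢 (i + 1)) le_rfl
  have hSmeas : ∀ k : ℕ, Measurable fun ω => ∑ i ∈ Finset.range k, X i ω := fun k =>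
    Finset.measurable_sum _ fun i _ => hXm i
  have hSbound : ∀ k : ℕ, ∀ᵐ ω ∂μ,
      lam * ∑ i ∈ Finset.range k, X i ω ≤ lam * ∑ i ∈ Finset.range k, b i := by
    intro k
    filter_upwards [ae_all_iff.2 hmem] with ω hω
    exact mul_le_mul_of_nonneg_left (Finset.sum_le_sum fun i _ => (hω i).2) hlam.le
  have hSint : ∀ k : ℕ,
      Integrable (fun ω => Real.exp (lam * ∑ i ∈ Finset.range k, X i ω)) μ := fun k =>
    int_exp_of_ae_le μ ((hSmeas k).const_mul lam) (hSbound k)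
  induction n with
  | zero => simp
  | succ n ih =>
    set K : ℝ := Real.exp (lam ^ 2 * (b n - a n) ^ 2 / 8) with hK
    have hcond : ∀ᵐ ω ∂μ, (μ[fun ω => Real.exp (lam * X n ω) | 𝒢 n]) ω ≤ K :=
      cond_hoeff μ (h𝒢 n) (hXm n) (hint n) (hmem n) (hsuper n) hlam
    have hSn_meas : Measurable[𝒢 n] fun ω => ∑ i ∈ Finset.range n, X i ω :=
      Finset.measurable_sum _ fun i hi =>
        (hadapt i).mono (h𝒢mono (Finset.mem_range.1 hi)) le_rfl
    have hF : StronglyMeasurable[𝒢 n] fun ω => Real.exp (lam * ∑ i ∈ Finset.range n, X i ω) :=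
      (Real.measurable_exp.comp (hSn_meas.const_mul lam)).stronglyMeasurable
    have hexpXn_int : Integrable (fun ω => Real.exp (lam * X n ω)) μ :=
      int_exp_of_ae_le μ ((hXm n).const_mul lam)
        ((hmem n).mono fun ω hω => mul_le_mul_of_nonneg_left hω.2 hlam.le)
    have hprod : (fun ω => Real.exp (lam * ∑ i ∈ Finset.range (n + 1), X i ω))
        = (fun ω => Real.exp (lam * ∑ i ∈ Finset.range n, X i ω))
          * (fun ω => Real.exp (lam * X n ω)) := by
      funext ω
      simp only [Pi.mul_apply]
      rw [Finset.sum_range_succ, mul_add, Real.exp_add]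
    have hh_int : Integrable ((fun ω => Real.exp (lam * ∑ i ∈ Finset.range n, X i ω))
        * (fun ω => Real.exp (lam * X n ω))) μ := by
      rw [← hprod]; exact hSint (n + 1)
    have hpull := condExp_mul_of_stronglyMeasurable_left (m := 𝒢 n) (μ := μ) hF hh_int hexpXn_int
    have step1 : ∫ ω, Real.exp (lam * ∑ i ∈ Finset.range (n + 1), X i ω) ∂μ
        ≤ K * ∫ ω, Real.exp (lam * ∑ i ∈ Finset.range n, X i ω) ∂μ := by
      rw [hprod, ← integral_condExp (h𝒢 n) (f := (fun ω => Real.exp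
        (lam * ∑ i ∈ Finset.range n, X i ω)) * (fun ω => Real.exp (lam * X n ω)))]
      have hle : ∀ᵐ ω ∂μ, (μ[(fun ω => Real.exp (lam * ∑ i ∈ Finset.range n, X i ω))
          * (fun ω => Real.exp (lam * X n ω)) | 𝒢 n]) ω
          ≤ K * Real.exp (lam * ∑ i ∈ Finset.range n, X i ω) := by
        filter_upwards [hpull, hcond] with ω hω1 hω2
        rw [hω1]
        simp only [Pi.mul_apply]
        calc Real.exp (lam * ∑ i ∈ Finset.range n, X i ω)
              * (μ[fun ω => Real.exp (lam * X n ω) | 𝒢 n]) ω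
            ≤ Real.exp (lam * ∑ i ∈ Finset.range n, X i ω) * K :=
              mul_le_mul_of_nonneg_left hω2 (Real.exp_pos _).le
          _ = K * Real.exp (lam * ∑ i ∈ Finset.range n, X i ω) := mul_comm _ _
      calc ∫ ω, (μ[(fun ω => Real.exp (lam * ∑ i ∈ Finset.range n, X i ω))
            * (fun ω => Real.exp (lam * X n ω)) | 𝒢 n]) ω ∂μ
          ≤ ∫ ω, K * Real.exp (lam * ∑ i ∈ Finset.range n, X i ω) ∂μ :=
            integral_mono_ae integrable_condExp ((hSint n).const_mul K) hle
        _ = K * ∫ ω, Real.exp (lam * ∑ i ∈ Finset.range n, X i ω) ∂μ := integral_const_mul _ _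
    calc ∫ ω, Real.exp (lam * ∑ i ∈ Finset.range (n + 1), X i ω) ∂μ
        ≤ K * ∫ ω, Real.exp (lam * ∑ i ∈ Finset.range n, X i ω) ∂μ := step1
      _ ≤ K * Real.exp (lam ^ 2 / 8 * ∑ i ∈ Finset.range n, (b i - a i) ^ 2) :=
          mul_le_mul_of_nonneg_left ih (Real.exp_pos _).le
      _ = Real.exp (lam ^ 2 / 8 * ∑ i ∈ Finset.range (n + 1), (b i - a i) ^ 2) := by
          rw [hK, ← Real.exp_add]
          congr 1
          rw [Finset.sum_range_succ]
          ring
end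

section
/- Let X₁,…,Xₙ be a martingale difference sequence (E[X_i | X₁,…,X_{i−1}] = 0) with X_i ≤ c almost surely for all i. Let Mₙ = Σ_{i=1}^n X_i and Vₙ = Σ_{i=1}^n E[X_i² | X₁,…,X_{i−1}]. Then for any λ ∈ [0, 1/c], E[exp(λ·Mₙ − (e−2)·λ²·Vₙ)] ≤ 1. -/
open MeasureTheory

lemma exp_hasSum (x : ℝ) : HasSum (fun n => x ^ n / n.factorial) (Real.exp x) := by
  rw [Real.exp_eq_exp_ℝ]
  exact NormedSpace.expSeries_div_hasSum_exp x

lemma key_exp {x : ℝ} (hx : x ≤ 1) :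
    Real.exp x ≤ 1 + x + (Real.exp 1 - 2) * x ^ 2 := by
  rcases le_or_gt x 0 with h0 | h0
  · have hq : Real.exp x ≤ 1 + x + x ^ 2 / 2 := by
      have hd : ∀ t : ℝ, HasDerivAt (fun t : ℝ => 1 + t + t ^ 2 / 2 - Real.exp t)
          (1 + t - Real.exp t) t := by
        intro t
        have h1 : HasDerivAt (fun t : ℝ => 1 + t + t ^ 2 / 2 - Real.exp t)
            (0 + 1 + (2 * t ^ 1 * 1) / 2 - Real.exp t) t :=
          (((hasDerivAt_const t (1:ℝ)).add (hasDerivAt_id t)).add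
            (((hasDerivAt_id t).pow 2).div_const 2)).sub (Real.hasDerivAt_exp t)
        convert h1 using 1; ring
      have hanti : AntitoneOn (fun t : ℝ => 1 + t + t ^ 2 / 2 - Real.exp t) (Set.Iic 0) := by
        apply antitoneOn_of_deriv_nonpos (convex_Iic 0)
        · exact (Continuous.sub (by continuity) Real.continuous_exp).continuousOn
        · intro t _
          exact (hd t).differentiableAt.differentiableWithinAt
        · intro t _
          rw [(hd t).deriv]
          have := Real.add_one_le_exp t
          linarith
      have := hanti (Set.mem_Iic.2 h0) (Set.mem_Iic.2 le_rfl) h0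
      simp only [Real.exp_zero] at this
      linarith
    have he : (1:ℝ)/2 ≤ Real.exp 1 - 2 := by
      have := Real.exp_one_gt_d9
      linarith
    nlinarith [sq_nonneg x]
  · have h1 : HasSum (fun n => x ^ (n + 2) / (n + 2).factorial)
        (Real.exp x - (1 + x)) := by
      have := (hasSum_nat_add_iff' 2).2 (exp_hasSum x)
      simpa [Finset.sum_range_succ] using this
    have h2 : HasSum (fun n : ℕ => x ^ 2 * ((1:ℝ) ^ (n + 2) / (n + 2).factorial))
        (x ^ 2 * (Real.exp 1 - (1 + 1))) := by
      refine HasSum.mul_left _ ?_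
      have := (hasSum_nat_add_iff' 2).2 (exp_hasSum 1)
      simpa [Finset.sum_range_succ] using this
    have hle : Real.exp x - (1 + x) ≤ x ^ 2 * (Real.exp 1 - (1 + 1)) := by
      refine hasSum_le (fun n => ?_) h1 h2
      rw [one_pow, mul_one_div]
      have hxp : x ^ (n + 2) ≤ x ^ 2 := by
        calc x ^ (n + 2) = x ^ 2 * x ^ n := by ring
        _ ≤ x ^ 2 * 1 := mul_le_mul_of_nonneg_left (pow_le_one₀ h0.le hx) (by positivity)
        _ = x ^ 2 := mul_one _
      have hfac : (0:ℝ) < ((n+2).factorial : ℝ) := by positivity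
      exact div_le_div_of_nonneg_right hxp hfac.le
    nlinarith

theorem bernstein_aux {Ω : Type*} [m0 : MeasurableSpace Ω] (μ : Measure Ω) [IsProbabilityMeasure μ]
    (X : ℕ → Ω → ℝ) (c : ℝ) (hc : 0 < c)
    (𝒢 : ℕ → MeasurableSpace Ω) (h𝒢 : ∀ i, 𝒢 i ≤ m0) (h𝒢mono : Monotone 𝒢)
    (hadapt : ∀ i, Measurable[𝒢 (i + 1)] (X i))
    (hint : ∀ i, Integrable (X i) μ)
    (hint2 : ∀ i, Integrable (fun ω => (X i ω) ^ 2) μ)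
    (hbdd : ∀ i, ∀ᵐ ω ∂μ, X i ω ≤ c)
    (hmart : ∀ i, ∀ᵐ ω ∂μ, (μ[X i | 𝒢 i]) ω = 0)
    (lam : ℝ) (hlam : lam ∈ Set.Icc 0 (1 / c)) (n : ℕ) :
    ∫ ω, Real.exp (lam * (∑ i ∈ Finset.range n, X i ω)
        - (Real.exp 1 - 2) * lam ^ 2 *
          (∑ i ∈ Finset.range n, (μ[fun ω' => (X i ω') ^ 2 | 𝒢 i]) ω)) ∂μ ≤ 1 := by
  obtain ⟨hlam0, hlam1⟩ := hlam
  have hlamc : lam * c ≤ 1 := by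
    calc lam * c ≤ (1/c) * c := mul_le_mul_of_nonneg_right hlam1 hc.le
    _ = 1 := by field_simp
  have he2 : (0:ℝ) ≤ Real.exp 1 - 2 := by
    have := Real.exp_one_gt_d9; linarith
  set a : ℝ := (Real.exp 1 - 2) * lam ^ 2 with ha_def
  have ha : 0 ≤ a := mul_nonneg he2 (sq_nonneg _)
  set W : ℕ → Ω → ℝ := fun i => μ[fun ω' => (X i ω') ^ 2 | 𝒢 i] with hW_def
  -- basic facts
  have hbdd' : ∀ᵐ ω ∂μ, ∀ i, X i ω ≤ c := ae_all_iff.2 hbdd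
  have hWnn : ∀ᵐ ω ∂μ, ∀ i, 0 ≤ W i ω :=
    ae_all_iff.2 fun i => condExp_nonneg (ae_of_all μ fun ω => sq_nonneg _)
  have hXm : ∀ i, Measurable (X i) := fun i => (hadapt i).mono (h𝒢 (i+1)) le_rfl
  -- measurability of the running process
  have hFmeas : ∀ m, StronglyMeasurable[𝒢 m] (fun ω =>
      Real.exp (lam * ∑ i ∈ Finset.range m, X i ω - a * ∑ i ∈ Finset.range m, W i ω)) := by
    intro m
    have hsum1 : Measurable[𝒢 m] (fun ω => ∑ i ∈ Finset.range m, X i ω) := by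
      apply Finset.measurable_sum
      intro i hi
      exact (hadapt i).mono (h𝒢mono (Finset.mem_range.1 hi)) le_rfl
    have hsum2 : Measurable[𝒢 m] (fun ω => ∑ i ∈ Finset.range m, W i ω) := by
      apply Finset.measurable_sum
      intro i hi
      exact (stronglyMeasurable_condExp.measurable).mono
        (h𝒢mono (Finset.mem_range.1 hi).le) le_rfl
    exact (Real.measurable_exp.comp
      (((hsum1.const_mul lam).sub (hsum2.const_mul a)))).stronglyMeasurable
  -- a.e. bound on the running process
  have hFbd : ∀ m, ∀ᵐ ω ∂μ, ‖Real.exp (lam * ∑ i ∈ Finset.range m, X i ω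
      - a * ∑ i ∈ Finset.range m, W i ω)‖ ≤ Real.exp m := by
    intro m
    filter_upwards [hbdd', hWnn] with ω hb hw
    rw [Real.norm_eq_abs, abs_of_pos (Real.exp_pos _), Real.exp_le_exp]
    have h1 : lam * ∑ i ∈ Finset.range m, X i ω ≤ m := by
      calc lam * ∑ i ∈ Finset.range m, X i ω ≤ lam * (m * c) := by
            apply mul_le_mul_of_nonneg_left _ hlam0
            calc ∑ i ∈ Finset.range m, X i ω ≤ ∑ _i ∈ Finset.range m, c :=
                  Finset.sum_le_sum fun i _ => hb i
            _ = m * c := by simp [mul_comm]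
      _ = m * (lam * c) := by ring
      _ ≤ m * 1 := mul_le_mul_of_nonneg_left hlamc (Nat.cast_nonneg m)
      _ = m := mul_one _
    have h2 : 0 ≤ a * ∑ i ∈ Finset.range m, W i ω :=
      mul_nonneg ha (Finset.sum_nonneg fun i _ => hw i)
    linarith
  have hFint : ∀ m, Integrable (fun ω => Real.exp (lam * ∑ i ∈ Finset.range m, X i ω
      - a * ∑ i ∈ Finset.range m, W i ω)) μ := fun m =>
    Integrable.mono' (integrable_const (Real.exp m))
      (((hFmeas m).mono (h𝒢 m)).aestronglyMeasurable) (hFbd m)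
  induction n with
  | zero => simp
  | succ n IH =>
    set F : Ω → ℝ := fun ω =>
      Real.exp (lam * ∑ i ∈ Finset.range n, X i ω - a * ∑ i ∈ Finset.range n, W i ω) with hF_def
    set G : Ω → ℝ := fun ω => F ω * Real.exp (-(a * W n ω)) with hG_def
    set h : Ω → ℝ := fun ω => Real.exp (lam * X n ω) with hh_def
    have hGpos : ∀ ω, 0 < G ω := fun ω => mul_pos (Real.exp_pos _) (Real.exp_pos _)
    have hG_meas : StronglyMeasurable[𝒢 n] G :=
      (hFmeas n).mul ((Real.measurable_exp.comp
        ((stronglyMeasurable_condExp.measurable.const_mul a).neg)).stronglyMeasurable)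
    have hG_bd : ∀ᵐ ω ∂μ, ‖G ω‖ ≤ Real.exp n := by
      filter_upwards [hFbd n, hWnn] with ω h1 h2
      rw [Real.norm_eq_abs, abs_of_pos (hGpos ω)]
      rw [Real.norm_eq_abs, abs_of_pos (Real.exp_pos _)] at h1
      calc F ω * Real.exp (-(a * W n ω)) ≤ F ω * 1 := by
            apply mul_le_mul_of_nonneg_left _ (Real.exp_pos _).le
            rw [← Real.exp_zero, Real.exp_le_exp]
            have := mul_nonneg ha (h2 n)
            linarith
      _ = F ω := mul_one _
      _ ≤ Real.exp n := h1
    have hh_meas : AEStronglyMeasurable h μ :=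
      (Real.measurable_exp.comp ((hXm n).const_mul lam)).aestronglyMeasurable
    have hh_int : Integrable h μ := by
      refine Integrable.mono' (integrable_const (Real.exp 1)) hh_meas ?_
      filter_upwards [hbdd n] with ω hω
      rw [Real.norm_eq_abs, abs_of_pos (Real.exp_pos _), Real.exp_le_exp]
      calc lam * X n ω ≤ lam * c := mul_le_mul_of_nonneg_left hω hlam0
      _ ≤ 1 := hlamc
    -- key conditional estimate
    have hp_int : Integrable ((fun _ => (1:ℝ)) + lam • X n + a • fun ω => (X n ω) ^ 2) μ :=
      ((integrable_const 1).add ((hint n).smul lam)).add ((hint2 n).smul a)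
    have hb : h ≤ᵐ[μ] (fun _ => (1:ℝ)) + lam • X n + a • fun ω => (X n ω) ^ 2 := by
      filter_upwards [hbdd n] with ω hω
      have h1 : lam * X n ω ≤ 1 :=
        le_trans (mul_le_mul_of_nonneg_left hω hlam0) hlamc
      have h2 := key_exp h1
      have h3 : (Real.exp 1 - 2) * (lam * X n ω) ^ 2 = a * (X n ω) ^ 2 := by
        rw [ha_def]; ring
      show Real.exp (lam * X n ω) ≤ 1 + lam * X n ω + a * (X n ω) ^ 2
      linarith
    have key : μ[h | 𝒢 n] ≤ᵐ[μ] fun ω => Real.exp (a * W n ω) := by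
      have mono1 : μ[h | 𝒢 n] ≤ᵐ[μ]
          μ[(fun _ => (1:ℝ)) + lam • X n + a • (fun ω => (X n ω) ^ 2) | 𝒢 n] :=
        condExp_mono hh_int hp_int hb
      have c1 : μ[(fun _ => (1:ℝ)) + lam • X n + a • (fun ω => (X n ω) ^ 2) | 𝒢 n] =ᵐ[μ]
          μ[(fun _ => (1:ℝ)) + lam • X n | 𝒢 n] + μ[a • (fun ω => (X n ω) ^ 2) | 𝒢 n] :=
        condExp_add ((integrable_const 1).add ((hint n).smul lam)) ((hint2 n).smul a) (𝒢 n)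
      have c2 : μ[(fun _ => (1:ℝ)) + lam • X n | 𝒢 n] =ᵐ[μ]
          μ[(fun _ => (1:ℝ)) | 𝒢 n] + μ[lam • X n | 𝒢 n] :=
        condExp_add (integrable_const 1) ((hint n).smul lam) (𝒢 n)
      have c3 : μ[lam • X n | 𝒢 n] =ᵐ[μ] lam • μ[X n | 𝒢 n] := condExp_smul lam (X n) (𝒢 n)
      have c4 : μ[a • (fun ω => (X n ω) ^ 2) | 𝒢 n] =ᵐ[μ]
          a • μ[(fun ω => (X n ω) ^ 2) | 𝒢 n] := condExp_smul a _ (𝒢 n)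
      filter_upwards [mono1, c1, c2, c3, c4, hmart n, hWnn] with ω e1 e2 e3 e4 e5 e6 e7
      have hcon : (μ[(fun _ => (1:ℝ)) | 𝒢 n]) ω = 1 := by
        rw [condExp_const (h𝒢 n)]
      have : (μ[(fun _ => (1:ℝ)) + lam • X n + a • (fun ω => (X n ω) ^ 2) | 𝒢 n]) ω
          = 1 + a * W n ω := by
        rw [e2, Pi.add_apply, e3, Pi.add_apply, hcon, e4, e5, Pi.smul_apply, Pi.smul_apply]
        simp only [Pi.smul_apply, smul_eq_mul, e6, mul_zero, add_zero]
        rfl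
      calc (μ[h | 𝒢 n]) ω ≤ 1 + a * W n ω := by rw [← this]; exact e1
      _ ≤ Real.exp (a * W n ω) := by
          have := Real.add_one_le_exp (a * W n ω); linarith
    -- the product is integrable
    have hGh_int : Integrable (G * h) μ := by
      refine Integrable.mono' (integrable_const (Real.exp n * Real.exp 1))
        (((hG_meas.mono (h𝒢 n)).aestronglyMeasurable).mul hh_meas) ?_
      filter_upwards [hG_bd, hbdd n] with ω h1 h2
      rw [Pi.mul_apply, norm_mul]
      apply mul_le_mul h1 _ (norm_nonneg _) (Real.exp_pos _).le
      rw [Real.norm_eq_abs, abs_of_pos (Real.exp_pos _), Real.exp_le_exp]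
      calc lam * X n ω ≤ lam * c := mul_le_mul_of_nonneg_left h2 hlam0
      _ ≤ 1 := hlamc
    have pull : μ[G * h | 𝒢 n] =ᵐ[μ] G * μ[h | 𝒢 n] :=
      condExp_stronglyMeasurable_mul_of_bound (h𝒢 n) hG_meas hh_int (Real.exp n) hG_bd
    -- main chain
    have step1 : ∫ ω, Real.exp (lam * ∑ i ∈ Finset.range (n+1), X i ω
        - a * ∑ i ∈ Finset.range (n+1), W i ω) ∂μ = ∫ ω, (G * h) ω ∂μ := by
      apply integral_congr_ae
      apply ae_of_all
      intro ω
      show Real.exp (lam * ∑ i ∈ Finset.range (n+1), X i ω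
          - a * ∑ i ∈ Finset.range (n+1), W i ω)
        = F ω * Real.exp (-(a * W n ω)) * Real.exp (lam * X n ω)
      show _ = Real.exp (lam * ∑ i ∈ Finset.range n, X i ω
          - a * ∑ i ∈ Finset.range n, W i ω) * Real.exp (-(a * W n ω)) * Real.exp (lam * X n ω)
      rw [← Real.exp_add, ← Real.exp_add, Finset.sum_range_succ, Finset.sum_range_succ]
      congr 1
      ring
    rw [step1, ← integral_condExp (h𝒢 n) (f := G * h) (μ := μ)]
    have step2 : ∫ ω, (μ[G * h | 𝒢 n]) ω ∂μ ≤ ∫ ω, F ω ∂μ := by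
      apply integral_mono_ae integrable_condExp (hFint n)
      filter_upwards [pull, key] with ω e1 e2
      rw [e1, Pi.mul_apply]
      calc G ω * (μ[h | 𝒢 n]) ω ≤ G ω * Real.exp (a * W n ω) :=
            mul_le_mul_of_nonneg_left e2 (hGpos ω).le
      _ = F ω := by
          show F ω * Real.exp (-(a * W n ω)) * Real.exp (a * W n ω) = F ω
          rw [mul_assoc, ← Real.exp_add, neg_add_cancel, Real.exp_zero, mul_one]
    exact le_trans step2 IH

/-- Bernstein-type moment generating function inequality for martingales
(Seldin et al.). -/
theorem stmt_3 {Ω : Type*} [m0 : MeasurableSpace Ω] (μ : Measure Ω) [IsProbabilityMeasure μ]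
    (n : ℕ) (X : ℕ → Ω → ℝ) (c : ℝ) (hc : 0 < c)
    (𝒢 : ℕ → MeasurableSpace Ω) (h𝒢 : ∀ i, 𝒢 i ≤ m0) (h𝒢mono : Monotone 𝒢)
    (hadapt : ∀ i, Measurable[𝒢 (i + 1)] (X i))
    (hint : ∀ i, Integrable (X i) μ)
    (hint2 : ∀ i, Integrable (fun ω => (X i ω) ^ 2) μ)
    (hbdd : ∀ i, ∀ᵐ ω ∂μ, X i ω ≤ c)
    (hmart : ∀ i, ∀ᵐ ω ∂μ, (μ[X i | 𝒢 i]) ω = 0)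
    (lam : ℝ) (hlam : lam ∈ Set.Icc 0 (1 / c)) :
    ∫ ω, Real.exp (lam * (∑ i ∈ Finset.range n, X i ω)
        - (Real.exp 1 - 2) * lam ^ 2 *
          (∑ i ∈ Finset.range n, (μ[fun ω' => (X i ω') ^ 2 | 𝒢 i]) ω)) ∂μ ≤ 1 := by
  exact bernstein_aux μ X c hc 𝒢 h𝒢 h𝒢mono hadapt hint hint2 hbdd hmart lam hlam n
end

section
/- Let w₁,…,w_K be i.i.d. samples from 𝒫 and φ a bounded measurable function. Then E[ln((1/K)Σ_{k=1}^K exp(φ(w_k)))] is nondecreasing in K, is always at most ln(E_{w~𝒫}[exp(φ(w))]), and converges to ln(E_{w~𝒫}[exp(φ(w))]) as K → ∞. -/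
open MeasureTheory Filter
open scoped ENNReal

noncomputable section

namespace BurdaAux

lemma integrable_bdd {α : Type*} [MeasurableSpace α] (μ : Measure α) [IsProbabilityMeasure μ]
    {g : α → ℝ} (hg : Measurable g) {M : ℝ} (h : ∀ x, |g x| ≤ M) : Integrable g μ :=
  (integrable_const M).mono' hg.aestronglyMeasurable
    (Filter.Eventually.of_forall fun x => by simpa [Real.norm_eq_abs] using h x)

lemma integral_comp_mp {α β : Type*} [MeasurableSpace α] [MeasurableSpace β]
    {μ : Measure α} {ν : Measure β} {T : α → β} (hT : MeasurePreserving T μ ν)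
    {g : β → ℝ} (hg : AEStronglyMeasurable g ν) :
    ∫ x, g (T x) ∂μ = ∫ y, g y ∂ν := by
  rw [← hT.map_eq] at hg ⊢
  exact (integral_map hT.measurable.aemeasurable hg).symm

variable {W : Type*} [MeasurableSpace W] (Pm : Measure W) [IsProbabilityMeasure Pm]

lemma mp_proj (K : ℕ) (i : Fin (K + 1)) :
    MeasurePreserving (fun (w : Fin (K + 1) → W) (j : Fin K) => w (i.succAbove j))
      (Measure.pi fun _ : Fin (K + 1) => Pm) (Measure.pi fun _ : Fin K => Pm) := by
  have h := measurePreserving_piFinSuccAbove (fun _ : Fin (K + 1) => Pm) i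
  have h2 : MeasurePreserving Prod.snd (Pm.prod (Measure.pi fun _ : Fin K => Pm))
      (Measure.pi fun _ : Fin K => Pm) :=
    ⟨measurable_snd, by simp⟩
  exact h2.comp h

lemma mp_eval (K : ℕ) (i : Fin (K + 1)) :
    MeasurePreserving (fun (w : Fin (K + 1) → W) => w i)
      (Measure.pi fun _ : Fin (K + 1) => Pm) Pm := by
  have h := measurePreserving_piFinSuccAbove (fun _ : Fin (K + 1) => Pm) i
  have h2 : MeasurePreserving Prod.fst (Pm.prod (Measure.pi fun _ : Fin K => Pm)) Pm :=
    ⟨measurable_fst, by simp⟩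
  exact h2.comp h

lemma integral_eval (K : ℕ) (i : Fin K) {h : W → ℝ} (hm : Measurable h) :
    ∫ w : Fin K → W, h (w i) ∂(Measure.pi fun _ : Fin K => Pm) = ∫ x, h x ∂Pm := by
  cases K with
  | zero => exact i.elim0
  | succ K => exact integral_comp_mp (mp_eval Pm K i) hm.aestronglyMeasurable

lemma integral_cross (K : ℕ) {i j : Fin (K + 1)} (hij : i ≠ j) {g : W → ℝ}
    (hg : Measurable g) :
    ∫ w : Fin (K + 1) → W, g (w i) * g (w j) ∂(Measure.pi fun _ : Fin (K + 1) => Pm)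
      = (∫ x, g x ∂Pm) * (∫ x, g x ∂Pm) := by
  obtain ⟨j', hj'⟩ := Fin.exists_succAbove_eq (Ne.symm hij)
  have h := measurePreserving_piFinSuccAbove (fun _ : Fin (K + 1) => Pm) i
  have hmeas : AEStronglyMeasurable (fun p : W × (Fin K → W) => g p.1 * g (p.2 j'))
      (Pm.prod (Measure.pi fun _ : Fin K => Pm)) :=
    ((hg.comp measurable_fst).mul (hg.comp ((measurable_pi_apply j').comp
      measurable_snd))).aestronglyMeasurable
  have key := integral_comp_mp h hmeas
  have heq : (fun w : Fin (K + 1) → W =>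
      (fun p : W × (Fin K → W) => g p.1 * g (p.2 j'))
        ((MeasurableEquiv.piFinSuccAbove (fun _ : Fin (K + 1) => W) i) w))
      = fun w : Fin (K + 1) → W => g (w i) * g (w j) := by
    funext w
    simp [MeasurableEquiv.piFinSuccAbove, Fin.insertNthEquiv, Fin.removeNth, hj']
  rw [heq] at key
  rw [key, integral_prod_mul (f := g) (g := fun w' : Fin K → W => g (w' j')),
    integral_eval Pm K j' hg]

lemma integral_sum_eval (K : ℕ) {g : W → ℝ} (hg : Measurable g) {M : ℝ}
    (hM : ∀ x, |g x| ≤ M) :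
    ∫ w : Fin K → W, (∑ k : Fin K, g (w k)) ∂(Measure.pi fun _ : Fin K => Pm)
      = (K : ℝ) * ∫ x, g x ∂Pm := by
  rw [integral_finset_sum]
  · simp only [integral_eval Pm K _ hg]
    simp
  · intro k _
    exact integrable_bdd _ (hg.comp (measurable_pi_apply k)) (fun w => hM (w k))

lemma integral_sq_sum (K : ℕ) {g : W → ℝ} (hg : Measurable g) {M : ℝ}
    (hM : ∀ x, |g x| ≤ M) (hzero : ∫ x, g x ∂Pm = 0) :
    ∫ w : Fin K → W, (∑ k : Fin K, g (w k)) ^ 2 ∂(Measure.pi fun _ : Fin K => Pm)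
      = (K : ℝ) * ∫ x, (g x) ^ 2 ∂Pm := by
  cases K with
  | zero => simp
  | succ K =>
    have hexp : ∀ w : Fin (K+1) → W, (∑ k : Fin (K+1), g (w k)) ^ 2
        = ∑ i : Fin (K+1), ∑ j : Fin (K+1), g (w i) * g (w j) := by
      intro w
      rw [sq, Finset.sum_mul_sum]
    simp_rw [hexp]
    have hint : ∀ i j : Fin (K+1), Integrable (fun w : Fin (K+1) → W => g (w i) * g (w j))
        (Measure.pi fun _ : Fin (K + 1) => Pm) := by
      intro i j
      refine integrable_bdd _ (((hg.comp (measurable_pi_apply i))).mul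
        ((hg.comp (measurable_pi_apply j)))) (M := M * M) (fun w => ?_)
      rw [abs_mul]
      exact mul_le_mul (hM _) (hM _) (abs_nonneg _) ((abs_nonneg (g (w j))).trans (hM (w j)))
    rw [integral_finset_sum _ (fun i _ => integrable_finset_sum _ (fun j _ => hint i j))]
    have hterm : ∀ i : Fin (K+1),
        (∫ w : Fin (K+1) → W, ∑ j : Fin (K+1), g (w i) * g (w j)
          ∂(Measure.pi fun _ : Fin (K + 1) => Pm)) = ∫ x, (g x) ^ 2 ∂Pm := by
      intro i
      rw [integral_finset_sum _ (fun j _ => hint i j)]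
      have : ∀ j : Fin (K+1),
          (∫ w : Fin (K+1) → W, g (w i) * g (w j) ∂(Measure.pi fun _ : Fin (K + 1) => Pm))
          = if i = j then ∫ x, (g x) ^ 2 ∂Pm else 0 := by
        intro j
        by_cases h : i = j
        · subst h
          simp only [if_pos rfl]
          have := integral_eval Pm (K+1) i (hg.mul hg)
          simp only [sq]
          rw [show (fun w : Fin (K+1) → W => g (w i) * g (w i))
              = fun w => (g * g) (w i) from rfl, this]
          simp
        · rw [if_neg h, integral_cross Pm K h hg, hzero, mul_zero]
      simp_rw [this]
      simp
    simp_rw [hterm]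
    simp

lemma log_le_aux {x y : ℝ} (hx : 0 < x) (hy : 0 < y) :
    Real.log x ≤ Real.log y + (x - y) / y := by
  have h := Real.log_le_sub_one_of_pos (div_pos hx hy)
  rw [Real.log_div hx.ne' hy.ne'] at h
  have h2 : x / y - 1 = (x - y) / y := by field_simp
  linarith

lemma div_le_div_of_nonneg_right' {p q r : ℝ} (h : p ≤ q) (hr : 0 < r) : p / r ≤ q / r := by
  gcongr

lemma log_lip {a x y : ℝ} (ha : 0 < a) (hx : a ≤ x) (hy : 0 < y) :
    Real.log y - Real.log x ≤ |x - y| / a := by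
  have hx0 : 0 < x := lt_of_lt_of_le ha hx
  have h := Real.log_le_sub_one_of_pos (div_pos hy hx0)
  rw [Real.log_div hy.ne' hx0.ne'] at h
  have h2 : y / x - 1 = (y - x) / x := by field_simp
  have habs : y - x ≤ |x - y| := by
    rw [abs_sub_comm]
    exact le_abs_self _
  have h3 : (y - x) / x ≤ |x - y| / x := div_le_div_of_nonneg_right' habs hx0
  have h4 : |x - y| / x ≤ |x - y| / a :=
    div_le_div_of_nonneg_left (abs_nonneg _) ha hx
  linarith

lemma avg_mem {W : Type*} {a b : ℝ} {f : W → ℝ} (ha : ∀ x, a ≤ f x) (hb : ∀ x, f x ≤ b)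
    (K : ℕ) (hK : 1 ≤ K) (w : Fin K → W) :
    a ≤ (K : ℝ)⁻¹ * ∑ k : Fin K, f (w k) ∧ (K : ℝ)⁻¹ * ∑ k : Fin K, f (w k) ≤ b := by
  have hK0 : (0 : ℝ) < (K : ℝ) := by exact_mod_cast hK
  have h1 : (K : ℝ) * a ≤ ∑ k : Fin K, f (w k) := by
    have : ∑ _k : Fin K, a ≤ ∑ k : Fin K, f (w k) :=
      Finset.sum_le_sum (fun k _ => ha (w k))
    simpa [Finset.sum_const, Fintype.card_fin, nsmul_eq_mul] using this
  have h2 : ∑ k : Fin K, f (w k) ≤ (K : ℝ) * b := by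
    have : ∑ k : Fin K, f (w k) ≤ ∑ _k : Fin K, b :=
      Finset.sum_le_sum (fun k _ => hb (w k))
    simpa [Finset.sum_const, Fintype.card_fin, nsmul_eq_mul] using this
  constructor
  · calc a = (K : ℝ)⁻¹ * ((K : ℝ) * a) := by field_simp
    _ ≤ (K : ℝ)⁻¹ * ∑ k : Fin K, f (w k) :=
        mul_le_mul_of_nonneg_left h1 (inv_nonneg.mpr hK0.le)
  · calc (K : ℝ)⁻¹ * ∑ k : Fin K, f (w k) ≤ (K : ℝ)⁻¹ * ((K : ℝ) * b) :=
        mul_le_mul_of_nonneg_left h2 (inv_nonneg.mpr hK0.le)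
    _ = b := by field_simp

end BurdaAux

/-- The expected log of the `K`-sample Monte Carlo estimate of
`E_{w~Pm}[exp(φ(w))]`, where `w₁, …, w_K` are i.i.d. samples from `Pm`. -/
def logMC {W : Type*} [MeasurableSpace W] (Pm : Measure W) (φ : W → ℝ) (K : ℕ) : ℝ :=
  ∫ w : Fin K → W, Real.log ((K : ℝ)⁻¹ * ∑ k : Fin K, Real.exp (φ (w k)))
    ∂(Measure.pi fun _ : Fin K => Pm)

/-- Burda et al.: the expected log Monte Carlo estimate is nondecreasing in
`K`, is at most `ln E_{w~Pm}[exp(φ(w))]`, and converges to it as `K → ∞`. -/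
theorem stmt_12 {W : Type*} [MeasurableSpace W] (Pm : Measure W) [IsProbabilityMeasure Pm]
    (φ : W → ℝ) (hφ : Measurable φ) (C : ℝ) (hbdd : ∀ w, |φ w| ≤ C) :
    (∀ K : ℕ, 1 ≤ K → logMC Pm φ K ≤ logMC Pm φ (K + 1))
    ∧ (∀ K : ℕ, 1 ≤ K → logMC Pm φ K ≤ Real.log (∫ w, Real.exp (φ w) ∂Pm))
    ∧ Tendsto (fun K => logMC Pm φ K) atTop (nhds (Real.log (∫ w, Real.exp (φ w) ∂Pm))) := by
  classical
  have hW : Nonempty W := by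
    by_contra h
    rw [not_nonempty_iff] at h
    have h1 : Pm Set.univ = 1 := measure_univ
    rw [Set.univ_eq_empty_iff.mpr h] at h1
    simp at h1
  set f : W → ℝ := fun w => Real.exp (φ w) with hf_def
  have hf : Measurable f := Real.measurable_exp.comp hφ
  set a : ℝ := Real.exp (-C) with ha_def
  set b : ℝ := Real.exp C with hb_def
  have ha0 : 0 < a := Real.exp_pos _
  have hb0 : 0 < b := Real.exp_pos _
  have hC0 : 0 ≤ C := le_trans (abs_nonneg _) (hbdd (Classical.arbitrary W))
  have hfa : ∀ w, a ≤ f w := fun w => Real.exp_le_exp.mpr (neg_le_of_abs_le (hbdd w))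
  have hfb : ∀ w, f w ≤ b := fun w => Real.exp_le_exp.mpr (le_of_abs_le (hbdd w))
  have hfM : ∀ w, |f w| ≤ b := fun w =>
    abs_le.mpr ⟨le_trans (by linarith) (hfa w), hfb w⟩
  have hfint : Integrable f Pm := BurdaAux.integrable_bdd Pm hf hfM
  set μI : ℝ := ∫ x, f x ∂Pm with hmu_def
  have hμa : a ≤ μI := by
    have h := integral_mono (integrable_const a) hfint hfa
    simpa using h
  have hμb : μI ≤ b := by
    have h := integral_mono hfint (integrable_const b) hfb
    simpa using h
  have hμ0 : 0 < μI := lt_of_lt_of_le ha0 hμa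
  -- measurability and bounds for the log integrand
  have hLmeas : ∀ K : ℕ, Measurable (fun w : Fin K → W =>
      Real.log ((K : ℝ)⁻¹ * ∑ k : Fin K, f (w k))) := fun K =>
    Real.measurable_log.comp (measurable_const.mul
      (Finset.measurable_sum Finset.univ (fun k _ => hf.comp (measurable_pi_apply k))))
  have hLbd : ∀ K : ℕ, 1 ≤ K → ∀ w : Fin K → W,
      |Real.log ((K : ℝ)⁻¹ * ∑ k : Fin K, f (w k))| ≤ C := by
    intro K hK w
    obtain ⟨h1, h2⟩ := BurdaAux.avg_mem hfa hfb K hK w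
    have hpos : 0 < (K : ℝ)⁻¹ * ∑ k : Fin K, f (w k) := lt_of_lt_of_le ha0 h1
    rw [abs_le]
    constructor
    · have := (Real.log_le_log_iff ha0 hpos).mpr h1
      rwa [ha_def, Real.log_exp] at this
    · have := (Real.log_le_log_iff hpos hb0).mpr h2
      rwa [hb_def, Real.log_exp] at this
  have hintL : ∀ K : ℕ, 1 ≤ K → Integrable
      (fun w : Fin K → W => Real.log ((K : ℝ)⁻¹ * ∑ k : Fin K, f (w k)))
      (Measure.pi fun _ : Fin K => Pm) := fun K hK =>
    BurdaAux.integrable_bdd _ (hLmeas K) (hLbd K hK)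
  have hlog : ∀ K : ℕ, logMC Pm φ K = ∫ w : Fin K → W,
      Real.log ((K : ℝ)⁻¹ * ∑ k : Fin K, f (w k)) ∂(Measure.pi fun _ : Fin K => Pm) :=
    fun K => rfl
  have hSint : ∀ K : ℕ, Integrable (fun w : Fin K → W => ∑ k : Fin K, f (w k))
      (Measure.pi fun _ : Fin K => Pm) := fun K =>
    integrable_finset_sum _ (fun k _ =>
      BurdaAux.integrable_bdd _ (hf.comp (measurable_pi_apply k)) (fun w => hfM (w k)))
  -- Part 2
  have part2 : ∀ K : ℕ, 1 ≤ K → logMC Pm φ K ≤ Real.log μI := by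
    intro K hK
    have hK0 : (K : ℝ) ≠ 0 := by
      have : (0 : ℝ) < (K : ℝ) := by exact_mod_cast hK
      exact this.ne'
    have hle : ∀ w : Fin K → W, Real.log ((K : ℝ)⁻¹ * ∑ k : Fin K, f (w k))
        ≤ Real.log μI + ((K : ℝ)⁻¹ * (∑ k : Fin K, f (w k)) - μI) / μI := fun w =>
      BurdaAux.log_le_aux (lt_of_lt_of_le ha0 (BurdaAux.avg_mem hfa hfb K hK w).1) hμ0
    have hint2 : Integrable (fun w : Fin K → W =>
        Real.log μI + ((K : ℝ)⁻¹ * (∑ k : Fin K, f (w k)) - μI) / μI)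
        (Measure.pi fun _ : Fin K => Pm) :=
      (integrable_const _).add ((((hSint K).const_mul _).sub (integrable_const _)).div_const _)
    rw [hlog K]
    calc (∫ w : Fin K → W, Real.log ((K : ℝ)⁻¹ * ∑ k : Fin K, f (w k))
          ∂(Measure.pi fun _ : Fin K => Pm))
        ≤ ∫ w : Fin K → W, (Real.log μI + ((K : ℝ)⁻¹ * (∑ k : Fin K, f (w k)) - μI) / μI)
          ∂(Measure.pi fun _ : Fin K => Pm) := integral_mono (hintL K hK) hint2 hle
      _ = Real.log μI := by
        have hsub : Integrable (fun w : Fin K → W =>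
            (K : ℝ)⁻¹ * (∑ k : Fin K, f (w k)) - μI) (Measure.pi fun _ : Fin K => Pm) := by
          exact ((hSint K).const_mul _).sub (integrable_const _)
        have hrest : Integrable (fun w : Fin K → W =>
            ((K : ℝ)⁻¹ * (∑ k : Fin K, f (w k)) - μI) / μI)
            (Measure.pi fun _ : Fin K => Pm) := hsub.div_const _
        have hcm : Integrable (fun w : Fin K → W =>
            (K : ℝ)⁻¹ * (∑ k : Fin K, f (w k))) (Measure.pi fun _ : Fin K => Pm) := by
          exact (hSint K).const_mul _
        rw [integral_add (integrable_const _) hrest, integral_div,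
          integral_sub hcm (integrable_const _), integral_const_mul,
          BurdaAux.integral_sum_eval Pm K hf hfM, integral_const, integral_const]
        simp only [measure_univ, ENNReal.toReal_one, smul_eq_mul, one_mul]
        rw [inv_mul_cancel_left₀ hK0]
        simp
        exact Or.inl (sub_self _)
  -- Part 1: monotonicity
  have part1 : ∀ K : ℕ, 1 ≤ K → logMC Pm φ K ≤ logMC Pm φ (K + 1) := by
    intro K hK
    have hK0 : (K : ℝ) ≠ 0 := by
      have : (0 : ℝ) < (K : ℝ) := by exact_mod_cast hK
      exact this.ne'
    have hc0 : (0 : ℝ) < ((K + 1 : ℕ) : ℝ) := by exact_mod_cast Nat.succ_pos K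
    set c : ℝ := ((K + 1 : ℕ) : ℝ) with hc_def
    set A : (Fin (K + 1) → W) → Fin (K + 1) → ℝ :=
      fun w i => (K : ℝ)⁻¹ * ∑ k : Fin K, f (w (i.succAbove k)) with hA_def
    have hAa : ∀ (w : Fin (K + 1) → W) (i : Fin (K + 1)), a ≤ A w i := fun w i =>
      (BurdaAux.avg_mem hfa hfb K hK (fun j => w (i.succAbove j))).1
    have hAbd : ∀ (w : Fin (K + 1) → W) (i : Fin (K + 1)), |Real.log (A w i)| ≤ C :=
      fun w i => hLbd K hK (fun j => w (i.succAbove j))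
    have hsumA : ∀ w : Fin (K + 1) → W,
        ∑ i : Fin (K + 1), A w i = ∑ j : Fin (K + 1), f (w j) := by
      intro w
      have h1 : ∀ i : Fin (K + 1), ∑ k : Fin K, f (w (i.succAbove k))
          = (∑ j : Fin (K + 1), f (w j)) - f (w i) := by
        intro i
        have := Fin.sum_univ_succAbove (fun j => f (w j)) i
        linarith
      calc ∑ i : Fin (K + 1), A w i
          = ∑ i : Fin (K + 1), (K : ℝ)⁻¹ * ((∑ j : Fin (K + 1), f (w j)) - f (w i)) := by
            refine Finset.sum_congr rfl fun i _ => ?_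
            show (K : ℝ)⁻¹ * ∑ k : Fin K, f (w (i.succAbove k)) = _
            rw [h1 i]
        _ = (K : ℝ)⁻¹ * ∑ i : Fin (K + 1), ((∑ j : Fin (K + 1), f (w j)) - f (w i)) := by
            rw [Finset.mul_sum]
        _ = (K : ℝ)⁻¹ * ((K : ℝ) * ∑ j : Fin (K + 1), f (w j)) := by
            rw [Finset.sum_sub_distrib, Finset.sum_const, Finset.card_univ, Fintype.card_fin]
            push_cast
            ring_nf
        _ = ∑ j : Fin (K + 1), f (w j) := by field_simp
    have hjensen : ∀ w : Fin (K + 1) → W,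
        ∑ i : Fin (K + 1), c⁻¹ * Real.log (A w i)
          ≤ Real.log (c⁻¹ * ∑ j : Fin (K + 1), f (w j)) := by
      intro w
      have hcon := strictConcaveOn_log_Ioi.concaveOn
      have hwsum : ∑ _i : Fin (K + 1), c⁻¹ = 1 := by
        rw [Finset.sum_const, Finset.card_univ, Fintype.card_fin, nsmul_eq_mul]
        rw [hc_def]
        field_simp
      have h := hcon.le_map_sum (t := Finset.univ) (w := fun _ : Fin (K + 1) => c⁻¹)
        (p := A w) (fun i _ => by positivity) hwsum
        (fun i _ => Set.mem_Ioi.mpr (lt_of_lt_of_le ha0 (hAa w i)))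
      simp only [smul_eq_mul] at h
      have hrw : ∑ i : Fin (K + 1), c⁻¹ * A w i = c⁻¹ * ∑ j : Fin (K + 1), f (w j) := by
        rw [← Finset.mul_sum, hsumA w]
      rwa [hrw] at h
    -- measurability / integrability of log (A · i)
    have hAmeas : ∀ i : Fin (K + 1),
        Measurable (fun w : Fin (K + 1) → W => Real.log (A w i)) := fun i =>
      Real.measurable_log.comp (measurable_const.mul
        (Finset.measurable_sum Finset.univ (fun k _ => hf.comp (measurable_pi_apply _))))
    have hAint : ∀ i : Fin (K + 1), Integrable (fun w : Fin (K + 1) → W => Real.log (A w i))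
        (Measure.pi fun _ : Fin (K + 1) => Pm) := fun i =>
      BurdaAux.integrable_bdd _ (hAmeas i) (fun w => hAbd w i)
    have hproj : ∀ i : Fin (K + 1),
        (∫ w : Fin (K + 1) → W, Real.log (A w i) ∂(Measure.pi fun _ : Fin (K + 1) => Pm))
          = logMC Pm φ K := by
      intro i
      rw [hlog K]
      exact BurdaAux.integral_comp_mp (BurdaAux.mp_proj Pm K i)
        (hLmeas K).aestronglyMeasurable
    have hintSum : Integrable (fun w : Fin (K + 1) → W =>
        ∑ i : Fin (K + 1), c⁻¹ * Real.log (A w i)) (Measure.pi fun _ : Fin (K + 1) => Pm) :=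
      integrable_finset_sum _ (fun i _ => (hAint i).const_mul _)
    have hintL' : Integrable (fun w : Fin (K + 1) → W =>
        Real.log (c⁻¹ * ∑ j : Fin (K + 1), f (w j))) (Measure.pi fun _ : Fin (K + 1) => Pm) :=
      hintL (K + 1) (Nat.le_add_left 1 K)
    have hstep : (∫ w : Fin (K + 1) → W, ∑ i : Fin (K + 1), c⁻¹ * Real.log (A w i)
        ∂(Measure.pi fun _ : Fin (K + 1) => Pm)) = logMC Pm φ K := by
      rw [integral_finset_sum _ (fun i _ => (hAint i).const_mul _)]
      have : ∀ i : Fin (K + 1), (∫ w : Fin (K + 1) → W, c⁻¹ * Real.log (A w i)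
          ∂(Measure.pi fun _ : Fin (K + 1) => Pm)) = c⁻¹ * logMC Pm φ K := by
        intro i
        rw [integral_const_mul, hproj i]
      simp_rw [this]
      rw [Finset.sum_const, Finset.card_univ, Fintype.card_fin, nsmul_eq_mul]
      rw [hc_def]
      field_simp
    calc logMC Pm φ K
        = ∫ w : Fin (K + 1) → W, ∑ i : Fin (K + 1), c⁻¹ * Real.log (A w i)
          ∂(Measure.pi fun _ : Fin (K + 1) => Pm) := hstep.symm
      _ ≤ ∫ w : Fin (K + 1) → W, Real.log (c⁻¹ * ∑ j : Fin (K + 1), f (w j))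
          ∂(Measure.pi fun _ : Fin (K + 1) => Pm) :=
          integral_mono hintSum hintL' hjensen
      _ = logMC Pm φ (K + 1) := (hlog (K + 1)).symm
  -- Part 3: convergence
  set g : W → ℝ := fun x => f x - μI with hg_def
  have hgmeas : Measurable g := hf.sub measurable_const
  have hgM : ∀ x, |g x| ≤ b + b := by
    intro x
    have h1 : |f x - μI| ≤ |f x| + |μI| := abs_sub _ _
    have h2 : |μI| ≤ b := abs_le.mpr ⟨by linarith, hμb⟩
    calc |g x| ≤ |f x| + |μI| := h1
      _ ≤ b + b := add_le_add (hfM x) h2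
  have hgzero : ∫ x, g x ∂Pm = 0 := by
    rw [hg_def]
    rw [integral_sub hfint (integrable_const _), integral_const]
    simp [hmu_def]
  set V : ℝ := ∫ x, (g x) ^ 2 ∂Pm with hV_def
  have hV0 : 0 ≤ V := integral_nonneg (fun x => sq_nonneg _)
  have key3 : ∀ K : ℕ, 1 ≤ K → ∀ ε : ℝ, 0 < ε →
      Real.log μI - logMC Pm φ K ≤ (ε + ε⁻¹ * (V / K)) / (2 * a) := by
    intro K hK ε hε
    have hKpos : (0 : ℝ) < (K : ℝ) := by exact_mod_cast hK
    have hK0 : (K : ℝ) ≠ 0 := hKpos.ne'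
    -- X w = avg - μI
    have hXident : ∀ w : Fin K → W,
        (K : ℝ)⁻¹ * (∑ k : Fin K, f (w k)) - μI = (K : ℝ)⁻¹ * ∑ k : Fin K, g (w k) := by
      intro w
      have : ∑ k : Fin K, g (w k) = (∑ k : Fin K, f (w k)) - (K : ℝ) * μI := by
        rw [hg_def]
        rw [Finset.sum_sub_distrib, Finset.sum_const, Finset.card_univ, Fintype.card_fin,
          nsmul_eq_mul]
      rw [this]
      field_simp
    have hptwise : ∀ w : Fin K → W,
        Real.log μI - Real.log ((K : ℝ)⁻¹ * ∑ k : Fin K, f (w k))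
          ≤ (ε + ε⁻¹ * ((K : ℝ)⁻¹ * (∑ k : Fin K, f (w k)) - μI) ^ 2) / (2 * a) := by
      intro w
      obtain ⟨h1, _⟩ := BurdaAux.avg_mem hfa hfb K hK w
      have hlip := BurdaAux.log_lip ha0 h1 hμ0
      set x : ℝ := (K : ℝ)⁻¹ * ∑ k : Fin K, f (w k) with hx_def
      have habs : |x - μI| / a ≤ (ε + ε⁻¹ * (x - μI) ^ 2) / (2 * a) := by
        rw [div_le_div_iff₀ ha0 (by positivity)]
        have hsq : 0 ≤ (|x - μI| - ε) ^ 2 := sq_nonneg _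
        have hxe : ε * (2 * |x - μI|) ≤ ε * ε + (x - μI) ^ 2 := by
          have h2 : (x - μI) ^ 2 = |x - μI| ^ 2 := (sq_abs _).symm
          nlinarith [abs_nonneg (x - μI)]
        have : |x - μI| * (2 * a) = a * (2 * |x - μI|) := by ring
        rw [this]
        have hεinv : ε⁻¹ * (ε * ε + (x - μI) ^ 2) = ε + ε⁻¹ * (x - μI) ^ 2 := by
          field_simp
        calc a * (2 * |x - μI|) ≤ a * (ε⁻¹ * (ε * (2 * |x - μI|))) := by
              rw [inv_mul_cancel_left₀ hε.ne']
          _ ≤ a * (ε⁻¹ * (ε * ε + (x - μI) ^ 2)) := by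
              apply mul_le_mul_of_nonneg_left _ ha0.le
              exact mul_le_mul_of_nonneg_left hxe (by positivity)
          _ = (ε + ε⁻¹ * (x - μI) ^ 2) * a := by rw [hεinv]; ring
      linarith
    -- integrability of the RHS
    have hXmeas : Measurable (fun w : Fin K → W =>
        (K : ℝ)⁻¹ * (∑ k : Fin K, f (w k)) - μI) :=
      (measurable_const.mul (Finset.measurable_sum Finset.univ
        (fun k _ => hf.comp (measurable_pi_apply k)))).sub measurable_const
    have hXbd : ∀ w : Fin K → W, |(K : ℝ)⁻¹ * (∑ k : Fin K, f (w k)) - μI| ≤ b + b := by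
      intro w
      obtain ⟨h1, h2⟩ := BurdaAux.avg_mem hfa hfb K hK w
      rw [abs_le]
      constructor <;> [nlinarith; nlinarith]
    have hXsqint : Integrable (fun w : Fin K → W =>
        ((K : ℝ)⁻¹ * (∑ k : Fin K, f (w k)) - μI) ^ 2) (Measure.pi fun _ : Fin K => Pm) := by
      refine BurdaAux.integrable_bdd _ (hXmeas.pow_const 2) (M := (b + b) ^ 2) (fun w => ?_)
      rw [abs_pow]
      exact pow_le_pow_left₀ (abs_nonneg _) (hXbd w) 2
    have hintR : Integrable (fun w : Fin K → W =>
        (ε + ε⁻¹ * ((K : ℝ)⁻¹ * (∑ k : Fin K, f (w k)) - μI) ^ 2) / (2 * a))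
        (Measure.pi fun _ : Fin K => Pm) :=
      ((integrable_const _).add (hXsqint.const_mul _)).div_const _
    have hintD : Integrable (fun w : Fin K → W =>
        Real.log μI - Real.log ((K : ℝ)⁻¹ * ∑ k : Fin K, f (w k)))
        (Measure.pi fun _ : Fin K => Pm) := (integrable_const _).sub (hintL K hK)
    -- integrate pointwise bound
    have hmono := integral_mono hintD hintR hptwise
    have hlhs : (∫ w : Fin K → W,
        (Real.log μI - Real.log ((K : ℝ)⁻¹ * ∑ k : Fin K, f (w k)))
        ∂(Measure.pi fun _ : Fin K => Pm)) = Real.log μI - logMC Pm φ K := by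
      rw [integral_sub (integrable_const _) (hintL K hK), integral_const, hlog K]
      simp
    -- compute variance integral
    have hvar : (∫ w : Fin K → W, ((K : ℝ)⁻¹ * (∑ k : Fin K, f (w k)) - μI) ^ 2
        ∂(Measure.pi fun _ : Fin K => Pm)) = V / K := by
      have heq : (fun w : Fin K → W => ((K : ℝ)⁻¹ * (∑ k : Fin K, f (w k)) - μI) ^ 2)
          = fun w : Fin K → W => ((K : ℝ)⁻¹) ^ 2 * (∑ k : Fin K, g (w k)) ^ 2 := by
        funext w
        rw [hXident w, mul_pow]
      rw [heq]
      have hsq : Integrable (fun w : Fin K → W => (∑ k : Fin K, g (w k)) ^ 2)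
          (Measure.pi fun _ : Fin K => Pm) := by
        refine BurdaAux.integrable_bdd _ ?_ (M := ((K : ℝ) * (b + b)) ^ 2) (fun w => ?_)
        · exact (Finset.measurable_sum Finset.univ
            (fun k _ => hgmeas.comp (measurable_pi_apply k))).pow_const 2
        · rw [abs_pow]
          apply pow_le_pow_left₀ (abs_nonneg _)
          calc |∑ k : Fin K, g (w k)| ≤ ∑ k : Fin K, |g (w k)| :=
                Finset.abs_sum_le_sum_abs _ _
            _ ≤ ∑ _k : Fin K, (b + b) := Finset.sum_le_sum (fun k _ => hgM (w k))
            _ = (K : ℝ) * (b + b) := by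
                rw [Finset.sum_const, Finset.card_univ, Fintype.card_fin, nsmul_eq_mul]
      rw [integral_const_mul, BurdaAux.integral_sq_sum Pm K hgmeas hgM hgzero, ← hV_def]
      field_simp
    -- assemble
    have hrhs : (∫ w : Fin K → W,
        ((ε + ε⁻¹ * ((K : ℝ)⁻¹ * (∑ k : Fin K, f (w k)) - μI) ^ 2) / (2 * a))
        ∂(Measure.pi fun _ : Fin K => Pm)) = (ε + ε⁻¹ * (V / K)) / (2 * a) := by
      rw [integral_div, integral_add (integrable_const _) (hXsqint.const_mul _),
        integral_const, integral_const_mul, hvar]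
      simp
    rw [hlhs, hrhs] at hmono
    exact hmono
  refine ⟨part1, part2, ?_⟩
  rw [Metric.tendsto_atTop]
  intro ε' hε'
  have he2 : 0 < ε' / 2 := by linarith
  set ε : ℝ := a * (ε' / 2) with hε_def
  have hεpos : 0 < ε := by positivity
  have hcpos : 0 < ε * a * (ε' / 2) := by positivity
  obtain ⟨N₁, hN₁⟩ := exists_nat_ge (V / (ε * a * (ε' / 2)))
  refine ⟨max N₁ 1, fun K hKN => ?_⟩
  have hK1 : 1 ≤ K := le_trans (le_max_right _ _) hKN
  have hKN₁ : (N₁ : ℝ) ≤ (K : ℝ) := by exact_mod_cast le_trans (le_max_left _ _) hKN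
  have hKpos : (0 : ℝ) < (K : ℝ) := by exact_mod_cast hK1
  have hVK : V / (K : ℝ) ≤ ε * a * (ε' / 2) := by
    rw [div_le_iff₀ hKpos]
    have h1 : V / (ε * a * (ε' / 2)) ≤ (K : ℝ) := le_trans hN₁ hKN₁
    calc V = (V / (ε * a * (ε' / 2))) * (ε * a * (ε' / 2)) := by field_simp
      _ ≤ (K : ℝ) * (ε * a * (ε' / 2)) := mul_le_mul_of_nonneg_right h1 hcpos.le
      _ = ε * a * (ε' / 2) * (K : ℝ) := by ring
  have hbound := key3 K hK1 ε hεpos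
  have hfinal : Real.log μI - logMC Pm φ K ≤ ε' / 2 := by
    have h2 : ε⁻¹ * (V / K) ≤ a * (ε' / 2) := by
      have h2a : V / (K : ℝ) ≤ ε * (a * (ε' / 2)) := by
        calc V / (K : ℝ) ≤ ε * a * (ε' / 2) := hVK
          _ = ε * (a * (ε' / 2)) := by ring
      calc ε⁻¹ * (V / K) ≤ ε⁻¹ * (ε * (a * (ε' / 2))) :=
            mul_le_mul_of_nonneg_left h2a (by positivity)
        _ = a * (ε' / 2) := by rw [inv_mul_cancel_left₀ hεpos.ne']
    have h3 : (ε + ε⁻¹ * (V / K)) / (2 * a) ≤ (a * (ε' / 2) + a * (ε' / 2)) / (2 * a) := by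
      apply BurdaAux.div_le_div_of_nonneg_right' _ (by positivity)
      rw [hε_def]
      linarith
    have h4 : (a * (ε' / 2) + a * (ε' / 2)) / (2 * a) = ε' / 2 := by
      field_simp
      ring
    calc Real.log μI - logMC Pm φ K ≤ (ε + ε⁻¹ * (V / K)) / (2 * a) := hbound
      _ ≤ ε' / 2 := by rw [← h4]; exact h3
  have hnn : 0 ≤ Real.log μI - logMC Pm φ K := sub_nonneg.mpr (part2 K hK1)
  rw [Real.dist_eq, abs_sub_comm, abs_of_nonneg hnn]
  linarith
end
end
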